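/- Let H be a simple 3-uniform, 3-partite hypergraph and I = I(H) its edge ideal in a polynomial ring over a field. If I^(2) ≠ I^2, then H contains a bad subhypergraph of length 3, i.e. there exist six distinct vertices v_1,…,v_6 of H such that {v_1,v_2,v_3}, {v_3,v_4,v_5} and {v_5,v_6,v_2} are all hyperedges of H. -/
import Mathlib


open MvPolynomial

/-- The `n`-th symbolic power of an ideal: the intersection of the `n`-th powers of the
minimal primes of `I`. -/
def symbolicPower {R : Type*} [CommRing R] (I : Ideal R) (n : ℕ) : Ideal R :=
  ⨅ p ∈ I.minimalPrimes, p ^ n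

/-- The edge ideal of a hypergraph with hyperedge set `H` on a vertex set `V`,
in the polynomial ring `k[x_v : v ∈ V]`. -/
noncomputable def edgeIdeal (k : Type*) [Field k] {V : Type*}
    (H : Set (Finset V)) : Ideal (MvPolynomial V k) :=
  Ideal.span ((fun E : Finset V => ∏ v ∈ E, X v) '' H)

/-- `H` contains a bad subhypergraph of length 3: six distinct vertices `v 0, …, v 5` such
that `{v 0, v 1, v 2}`, `{v 2, v 3, v 4}` and `{v 4, v 5, v 1}` are hyperedges of `H`. -/
def HasBadSubhypergraph {V : Type*} [DecidableEq V] (H : Set (Finset V)) : Prop :=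
  ∃ v : Fin 6 → V, Function.Injective v ∧
    ({v 0, v 1, v 2} : Finset V) ∈ H ∧
    ({v 2, v 3, v 4} : Finset V) ∈ H ∧
    ({v 4, v 5, v 1} : Finset V) ∈ H

set_option linter.unusedSectionVars false

namespace BadHyp

variable {k : Type*} [Field k] {V : Type*} [Fintype V] [DecidableEq V]

/-- exponent vector of the squarefree monomial with support `E` -/
noncomputable def expOf (E : Finset V) : V →₀ ℕ := ∑ v ∈ E, Finsupp.single v 1

lemma expOf_apply (E : Finset V) (w : V) : expOf E w = if w ∈ E then 1 else 0 := by
  classical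
  simp only [expOf, Finsupp.finset_sum_apply, Finsupp.single_apply]
  rw [Finset.sum_ite_eq' E w (fun _ => 1)]

lemma prod_X_eq (E : Finset V) :
    (∏ v ∈ E, MvPolynomial.X v : MvPolynomial V k) = monomial (expOf E) 1 := by
  classical
  induction E using Finset.induction_on with
  | empty => simp [expOf]
  | @insert a s ha ih =>
      rw [Finset.prod_insert ha, ih, X, monomial_mul, one_mul]
      congr 1
      simp [expOf, Finset.sum_insert ha]


/-- the monomial prime corresponding to a set of variables -/
noncomputable def PC (k : Type*) [Field k] {V : Type*} (C : Finset V) : Ideal (MvPolynomial V k) :=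
  Ideal.span (MvPolynomial.X '' (C : Set V))

/-- the substitution killing the variables in `C` -/
noncomputable def killC (k : Type*) [Field k] {V : Type*} [DecidableEq V] (C : Finset V) :
    MvPolynomial V k →ₐ[k] MvPolynomial V k :=
  aeval (fun v => if v ∈ C then 0 else MvPolynomial.X v)

lemma killC_monomial_zero (C : Finset V) (d : V →₀ ℕ) (c : k) {v : V} (hv : v ∈ C)
    (hd : d v ≠ 0) : killC k C (monomial d c) = 0 := by
  rw [killC, aeval_monomial]
  have hvs : v ∈ d.support := Finsupp.mem_support_iff.mpr hd
  rw [Finsupp.prod, Finset.prod_eq_zero hvs (by simp [hv, zero_pow hd]), mul_zero]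

lemma killC_monomial_id (C : Finset V) (d : V →₀ ℕ) (c : k) (h : ∀ v ∈ C, d v = 0) :
    killC k C (monomial d c) = monomial d c := by
  rw [killC, aeval_monomial]
  rw [Finsupp.prod]
  have : (∏ i ∈ d.support, ((if i ∈ C then 0 else MvPolynomial.X i) : MvPolynomial V k) ^ d i)
      = ∏ i ∈ d.support, (MvPolynomial.X i : MvPolynomial V k) ^ d i := by
    apply Finset.prod_congr rfl
    intro v hv
    have : v ∉ C := fun hc => (Finsupp.mem_support_iff.mp hv) (h v hc)
    simp [this]
  rw [this, prod_X_pow_eq_monomial, algebraMap_eq, C_mul_monomial, mul_one]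

lemma sub_killC_mem (C : Finset V) (f : MvPolynomial V k) : f - killC k C f ∈ PC k C := by
  classical
  rw [f.as_sum]
  rw [map_sum, ← Finset.sum_sub_distrib]
  apply Ideal.sum_mem
  intro d hd
  by_cases h : ∃ v ∈ C, d v ≠ 0
  · obtain ⟨v, hv, hdv⟩ := h
    rw [killC_monomial_zero C d _ hv hdv, sub_zero]
    rw [PC, mem_ideal_span_X_image]
    intro m hm
    have : m = d := by
      have := support_monomial_subset hm
      simpa using this
    exact ⟨v, Finset.mem_coe.mpr hv, this ▸ hdv⟩
  · push_neg at h
    rw [killC_monomial_id C d _ h, sub_self]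
    exact Ideal.zero_mem _

lemma mem_PC_iff (C : Finset V) (f : MvPolynomial V k) : f ∈ PC k C ↔ killC k C f = 0 := by
  constructor
  · intro hf
    have : PC k C ≤ RingHom.ker (killC k C).toRingHom := by
      rw [PC, Ideal.span_le]
      rintro _ ⟨v, hv, rfl⟩
      simp only [SetLike.mem_coe, RingHom.mem_ker, AlgHom.toRingHom_eq_coe, RingHom.coe_coe]
      rw [killC]
      simp [Finset.mem_coe.mp hv]
    exact this hf
  · intro hf
    have := sub_killC_mem C f
    rwa [hf, sub_zero] at this

lemma PC_isPrime (C : Finset V) : (PC k C).IsPrime := by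
  constructor
  · intro h
    have : (1 : MvPolynomial V k) ∈ PC k C := h ▸ Submodule.mem_top
    rw [mem_PC_iff, map_one] at this
    exact one_ne_zero this
  · intro f g hfg
    rw [mem_PC_iff, map_mul] at hfg
    rcases mul_eq_zero.mp hfg with h | h
    · exact Or.inl ((mem_PC_iff C f).mpr h)
    · exact Or.inr ((mem_PC_iff C g).mpr h)


lemma sum_single_one (C : Finset V) {u : V} (hu : u ∈ C) :
    ∑ w ∈ C, (Finsupp.single u 1 : V →₀ ℕ) w = 1 := by
  classical
  simp only [Finsupp.single_apply]
  rw [Finset.sum_ite_eq C u (fun _ => 1)]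
  simp [hu]

lemma weight_two_of_mem_PC_sq (C : Finset V) (f : MvPolynomial V k)
    (hf : f ∈ PC k C ^ 2) : ∀ m ∈ f.support, 2 ≤ ∑ v ∈ C, m v := by
  classical
  intro m hm
  set D : Set (V →₀ ℕ) :=
    {d | ∃ u ∈ C, ∃ v ∈ C, d = Finsupp.single u 1 + Finsupp.single v 1} with hD
  have hsub : f ∈ Ideal.span ((fun d => monomial d (1:k)) '' D) := by
    have h2 : PC k C ^ 2 ≤ Ideal.span ((fun d => monomial d (1:k)) '' D) := by
      rw [pow_two, PC, Ideal.span_mul_span', Ideal.span_le]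
      intro a ha
      rw [Set.mem_mul] at ha
      obtain ⟨x, ⟨u, hu, rfl⟩, y, ⟨v, hv, rfl⟩, rfl⟩ := ha
      apply Ideal.subset_span
      refine ⟨Finsupp.single u 1 + Finsupp.single v 1,
        ⟨u, Finset.mem_coe.mp hu, v, Finset.mem_coe.mp hv, rfl⟩, ?_⟩
      rw [X, X, monomial_mul, one_mul]
    exact h2 hf
  obtain ⟨d, hd, hdm⟩ := mem_ideal_span_monomial_image.mp hsub m hm
  obtain ⟨u, hu, v, hv, rfl⟩ := hd
  have hsum : ∑ w ∈ C, (Finsupp.single u 1 + Finsupp.single v 1 : V →₀ ℕ) w = 2 := by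
    simp only [Finsupp.add_apply, Finset.sum_add_distrib]
    rw [sum_single_one C hu, sum_single_one C hv]
  calc (2:ℕ) = ∑ w ∈ C, (Finsupp.single u 1 + Finsupp.single v 1 : V →₀ ℕ) w := hsum.symm
    _ ≤ ∑ w ∈ C, m w := Finset.sum_le_sum fun w _ => hdm w

lemma mem_PC_sq_of_symbolic {I : Ideal (MvPolynomial V k)} {f : MvPolynomial V k}
    (hf : f ∈ symbolicPower I 2) (C : Finset V) (hle : I ≤ PC k C) : f ∈ PC k C ^ 2 := by
  have : (PC k C).IsPrime := PC_isPrime C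
  obtain ⟨p, hp, hple⟩ := Ideal.exists_minimalPrimes_le hle
  have hfp : f ∈ p ^ 2 := by
    simp only [symbolicPower, Ideal.mem_iInf] at hf
    exact hf p hp
  exact Ideal.pow_right_mono hple 2 hfp

lemma edgeIdeal_le_PC {H : Set (Finset V)} {C : Finset V}
    (hC : ∀ E ∈ H, ∃ v ∈ E, v ∈ C) : edgeIdeal k H ≤ PC k C := by
  rw [edgeIdeal, Ideal.span_le]
  rintro _ ⟨E, hE, rfl⟩
  dsimp only
  have : (∏ v ∈ E, MvPolynomial.X v : MvPolynomial V k) = monomial (expOf E) 1 := prod_X_eq E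
  rw [SetLike.mem_coe, this, PC, mem_ideal_span_X_image]
  intro m hm
  have hmE : m = expOf E := by
    have := support_monomial_subset hm
    simpa using this
  obtain ⟨v, hvE, hvC⟩ := hC E hE
  refine ⟨v, Finset.mem_coe.mpr hvC, ?_⟩
  rw [hmE, expOf_apply]
  simp [hvE]

lemma monomial_mem_sq {H : Set (Finset V)} {E F : Finset V} (hE : E ∈ H) (hF : F ∈ H)
    {m : V →₀ ℕ} (hle : expOf E + expOf F ≤ m) (c : k) :
    monomial m c ∈ (edgeIdeal k H) ^ 2 := by
  have hEF : (∏ v ∈ E, MvPolynomial.X v) * (∏ v ∈ F, MvPolynomial.X v)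
      ∈ (edgeIdeal k H) ^ 2 := by
    rw [pow_two]
    exact Ideal.mul_mem_mul (Ideal.subset_span ⟨E, hE, rfl⟩) (Ideal.subset_span ⟨F, hF, rfl⟩)
  have heq : monomial m c
      = monomial (m - (expOf E + expOf F)) c *
        ((∏ v ∈ E, MvPolynomial.X v) * (∏ v ∈ F, MvPolynomial.X v)) := by
    rw [prod_X_eq, prod_X_eq, monomial_mul, monomial_mul, mul_one, mul_one, ← add_assoc]
    congr 1
    rw [add_assoc, tsub_add_cancel_of_le hle]
  rw [heq]
  exact Ideal.mul_mem_left _ _ hEF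

lemma fin3_eq : ∀ (i j a b : Fin 3), i ≠ j → a ≠ i → a ≠ j → b ≠ i → b ≠ j → a = b := by
  decide

lemma third {E : Finset V} (hc : E.card = 3) {a b : V} (ha : a ∈ E) (hb : b ∈ E)
    (hab : a ≠ b) : ∃ x, x ∈ E ∧ x ≠ a ∧ x ≠ b ∧ E = {a, b, x} := by
  classical
  have hbe : b ∈ E.erase a := Finset.mem_erase.mpr ⟨hab.symm, hb⟩
  have h1 : ((E.erase a).erase b).card = 1 := by
    rw [Finset.card_erase_of_mem hbe, Finset.card_erase_of_mem ha, hc]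
  obtain ⟨x, hx⟩ := Finset.card_eq_one.mp h1
  have hxmem : x ∈ (E.erase a).erase b := hx ▸ Finset.mem_singleton_self x
  rw [Finset.mem_erase, Finset.mem_erase] at hxmem
  obtain ⟨hxb, hxa, hxE⟩ := hxmem
  refine ⟨x, hxE, hxa, hxb, ?_⟩
  have hsub : ({a, b, x} : Finset V) ⊆ E := by
    intro w hw
    simp only [Finset.mem_insert, Finset.mem_singleton] at hw
    rcases hw with rfl | rfl | rfl <;> assumption
  have hcard : ({a, b, x} : Finset V).card = 3 :=
    Finset.card_eq_three.mpr ⟨a, b, x, hab, (Ne.symm hxa), (Ne.symm hxb), rfl⟩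
  exact (Finset.eq_of_subset_of_card_le hsub (by omega)).symm

set_option maxHeartbeats 1000000 in
lemma inj6 {α : Type*} {x e c y f g : α}
    (h1 : x ≠ e) (h2 : x ≠ c) (h3 : x ≠ y) (h4 : x ≠ f) (h5 : x ≠ g)
    (h6 : e ≠ c) (h7 : e ≠ y) (h8 : e ≠ f) (h9 : e ≠ g)
    (h10 : c ≠ y) (h11 : c ≠ f) (h12 : c ≠ g)
    (h13 : y ≠ f) (h14 : y ≠ g) (h15 : f ≠ g) :
    Function.Injective ![x, e, c, y, f, g] := by
  intro i j hij
  fin_cases i <;> fin_cases j <;>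
    first
      | rfl
      | (exfalso
         revert hij
         show ¬ _ = _
         simp only [Matrix.cons_val_zero, Matrix.cons_val_one, Matrix.head_cons,
           Matrix.cons_val_two, Matrix.cons_val_three, Matrix.cons_val_four,
           Matrix.vecTail, Matrix.vecHead, Matrix.cons_val_succ, Function.comp]
         first
           | exact h1 | exact h2 | exact h3 | exact h4 | exact h5
           | exact h6 | exact h7 | exact h8 | exact h9 | exact h10
           | exact h11 | exact h12 | exact h13 | exact h14 | exact h15
           | exact h1.symm | exact h2.symm | exact h3.symm | exact h4.symm | exact h5.symm
           | exact h6.symm | exact h7.symm | exact h8.symm | exact h9.symm | exact h10.symm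
           | exact h11.symm | exact h12.symm | exact h13.symm | exact h14.symm | exact h15.symm)

set_option maxHeartbeats 2000000 in
lemma comb (H : Set (Finset V)) (Xp : Fin 3 → Finset V)
    (hdisj : ∀ i j : Fin 3, i ≠ j → Disjoint (Xp i) (Xp j))
    (hcov : ∀ v : V, ∃ i : Fin 3, v ∈ Xp i)
    (huniform : ∀ E ∈ H, E.card = 3)
    (hpartite : ∀ E ∈ H, ∀ i : Fin 3, (E ∩ Xp i).card = 1)
    (hbad : ¬ HasBadSubhypergraph H)
    (m : V →₀ ℕ)
    (hcov2 : ∀ C : Finset V, (∀ E ∈ H, ∃ v ∈ E, v ∈ C) → 2 ≤ ∑ v ∈ C, m v) :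
    ∃ E ∈ H, ∃ F ∈ H, expOf E + expOf F ≤ m := by
  classical
  by_contra hno
  push_neg at hno
  -- the partition function
  choose pt hpt using hcov
  have edgeInj : ∀ E ∈ H, ∀ u ∈ E, ∀ v ∈ E, pt u = pt v → u = v := by
    intro E hE u hu v hv huv
    by_contra hne
    have hsub : ({u, v} : Finset V) ⊆ E ∩ Xp (pt u) := by
      intro w hw
      simp only [Finset.mem_insert, Finset.mem_singleton] at hw
      rcases hw with h | h
      · rw [h]; exact Finset.mem_inter.mpr ⟨hu, hpt u⟩
      · rw [h]; exact Finset.mem_inter.mpr ⟨hv, by rw [huv]; exact hpt v⟩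
    have h2 : 2 ≤ (E ∩ Xp (pt u)).card := by
      calc 2 = ({u, v} : Finset V).card := (Finset.card_pair hne).symm
        _ ≤ _ := Finset.card_le_card hsub
    rw [hpartite E hE (pt u)] at h2
    omega
  set A : Finset V := Finset.univ.filter (fun v => 2 ≤ m v) with hA
  set B : Finset V := Finset.univ.filter (fun v => m v = 1) with hB
  have hAm : ∀ v ∈ A, 2 ≤ m v := by intro v hv; simpa [hA] using hv
  have hBm : ∀ v ∈ B, m v = 1 := by intro v hv; simpa [hB] using hv
  have hABm : ∀ v ∈ A ∪ B, 1 ≤ m v := by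
    intro v hv
    rcases Finset.mem_union.mp hv with h | h
    · have := hAm v h; omega
    · have := hBm v h; omega
  have hmem : ∀ v, 1 ≤ m v → v ∈ A ∪ B := by
    intro v hv
    rcases Nat.lt_or_ge (m v) 2 with h | h
    · exact Finset.mem_union_right _ (by simp [hB]; omega)
    · exact Finset.mem_union_left _ (by simp [hA]; omega)
  -- Step 1 : some edge inside A ∪ B
  have step1 : ∃ E₀ ∈ H, E₀ ⊆ A ∪ B := by
    by_contra h
    push_neg at h
    have hcv : ∀ E ∈ H, ∃ v ∈ E, v ∈ Finset.univ \ (A ∪ B) := by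
      intro E hE
      obtain ⟨v, hv, hv2⟩ := Finset.not_subset.mp (h E hE)
      exact ⟨v, hv, Finset.mem_sdiff.mpr ⟨Finset.mem_univ v, hv2⟩⟩
    have hw := hcov2 _ hcv
    have hz : ∑ v ∈ Finset.univ \ (A ∪ B), m v = 0 := by
      apply Finset.sum_eq_zero
      intro v hv
      have h1 : v ∉ A ∪ B := (Finset.mem_sdiff.mp hv).2
      by_contra h2
      exact h1 (hmem v (by omega))
    omega
  -- claim 1 : every edge inside A ∪ B has at least two B-vertices
  have claim1 : ∀ E ∈ H, E ⊆ A ∪ B → 2 ≤ (E ∩ B).card := by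
    intro E hE hEs
    set C := Finset.univ \ (A ∪ (B \ E)) with hC
    have hcv : ∀ F ∈ H, ∃ v ∈ F, v ∈ C := by
      intro F hF
      by_contra hcon
      push_neg at hcon
      have hFsub : ∀ v ∈ F, v ∈ A ∪ (B \ E) := by
        intro v hv
        have h1 := hcon v hv
        rw [hC, Finset.mem_sdiff] at h1
        push_neg at h1
        exact h1 (Finset.mem_univ v)
      apply hno E hE F hF
      rw [Finsupp.le_def]
      intro v
      rw [Finsupp.add_apply, expOf_apply, expOf_apply]
      by_cases hvE : v ∈ E <;> by_cases hvF : v ∈ F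
      · -- v ∈ E ∩ F : v ∈ A
        have h1 := hFsub v hvF
        rcases Finset.mem_union.mp h1 with h | h
        · have := hAm v h; simp [hvE, hvF]; omega
        · exact absurd hvE (Finset.mem_sdiff.mp h).2
      · have := hABm v (hEs hvE); simp [hvE, hvF]; omega
      · have h1 := hFsub v hvF
        have h2 : 1 ≤ m v := by
          rcases Finset.mem_union.mp h1 with h | h
          · have := hAm v h; omega
          · have := hBm v (Finset.mem_sdiff.mp h).1; omega
        simp [hvE, hvF]; omega
      · simp [hvE, hvF]
    have hw := hcov2 C hcv
    have hsub : E ∩ B ⊆ C := by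
      intro v hv
      obtain ⟨hvE, hvB⟩ := Finset.mem_inter.mp hv
      rw [hC, Finset.mem_sdiff]
      refine ⟨Finset.mem_univ v, ?_⟩
      intro h
      rcases Finset.mem_union.mp h with h | h
      · have := hAm v h; have := hBm v hvB; omega
      · exact (Finset.mem_sdiff.mp h).2 hvE
    have hzero : ∀ v ∈ C, v ∉ E ∩ B → m v = 0 := by
      intro v hvC hvEB
      rw [hC, Finset.mem_sdiff] at hvC
      have h1 : v ∉ A ∪ (B \ E) := hvC.2
      rw [Finset.mem_union] at h1
      push_neg at h1
      have h2 : ¬ 2 ≤ m v := fun hh => h1.1 (by simp [hA]; omega)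
      rcases Nat.eq_or_lt_of_le (Nat.zero_le (m v)) with h | h
      · omega
      · have hv1 : m v = 1 := by omega
        have hvB : v ∈ B := by simp [hB]; omega
        have hvE : v ∈ E := by
          by_contra hvE
          exact h1.2 (Finset.mem_sdiff.mpr ⟨hvB, hvE⟩)
        exact absurd (Finset.mem_inter.mpr ⟨hvE, hvB⟩) hvEB
    have h1 : ∑ v ∈ E ∩ B, m v = ∑ v ∈ C, m v := Finset.sum_subset hsub hzero
    have h2 : ∑ v ∈ E ∩ B, m v = (E ∩ B).card := by
      rw [Finset.card_eq_sum_ones]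
      exact Finset.sum_congr rfl fun v hv => hBm v (Finset.mem_inter.mp hv).2
    omega
  -- claim 2 : every B-vertex is missed by some edge inside A ∪ B
  have claim2 : ∀ b ∈ B, ∃ E ∈ H, E ⊆ A ∪ B ∧ b ∉ E := by
    intro b hb
    set C := (Finset.univ \ (A ∪ B)) ∪ {b} with hC
    by_cases hcv : ∀ E ∈ H, ∃ v ∈ E, v ∈ C
    · exfalso
      have hw := hcov2 C hcv
      have hsub : ({b} : Finset V) ⊆ C := by
        intro v hv
        rw [Finset.mem_singleton] at hv
        exact hv ▸ Finset.mem_union_right _ (Finset.mem_singleton_self b)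
      have hzero : ∀ v ∈ C, v ∉ ({b} : Finset V) → m v = 0 := by
        intro v hvC hvb
        rw [Finset.mem_singleton] at hvb
        rcases Finset.mem_union.mp hvC with h | h
        · have h1 : v ∉ A ∪ B := (Finset.mem_sdiff.mp h).2
          by_contra h2
          exact h1 (hmem v (by omega))
        · exact absurd (Finset.mem_singleton.mp h) hvb
      have h1 : ∑ v ∈ ({b} : Finset V), m v = ∑ v ∈ C, m v := Finset.sum_subset hsub hzero
      rw [Finset.sum_singleton] at h1
      have := hBm b hb
      omega
    · push_neg at hcv
      obtain ⟨E, hE, hEv⟩ := hcv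
      refine ⟨E, hE, ?_, ?_⟩
      · intro v hv
        have h1 := hEv v hv
        rw [hC, Finset.mem_union] at h1
        push_neg at h1
        have h2 := h1.1
        rw [Finset.mem_sdiff] at h2
        push_neg at h2
        exact h2 (Finset.mem_univ v)
      · intro hbE
        exact hEv b hbE (Finset.mem_union_right _ (Finset.mem_singleton_self b))
  -- claim 3 : any two edges inside A ∪ B share a B-vertex
  have claim3 : ∀ E ∈ H, E ⊆ A ∪ B → ∀ F ∈ H, F ⊆ A ∪ B →
      ∃ v, v ∈ E ∩ F ∧ v ∈ B := by
    intro E hE hEs F hF hFs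
    by_contra hcon
    push_neg at hcon
    apply hno E hE F hF
    rw [Finsupp.le_def]
    intro v
    rw [Finsupp.add_apply, expOf_apply, expOf_apply]
    by_cases hvE : v ∈ E <;> by_cases hvF : v ∈ F
    · have h1 : v ∉ B := hcon v (Finset.mem_inter.mpr ⟨hvE, hvF⟩)
      have h2 : v ∈ A ∪ B := hEs hvE
      have h3 : v ∈ A := by
        rcases Finset.mem_union.mp h2 with h | h
        · exact h
        · exact absurd h h1
      have := hAm v h3; simp [hvE, hvF]; omega
    · have := hABm v (hEs hvE); simp [hvE, hvF]; omega
    · have := hABm v (hFs hvF); simp [hvE, hvF]; omega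
    · simp [hvE, hvF]
  -- intersection cardinality bounds
  have interCard : ∀ E ∈ H, E ⊆ A ∪ B → ∀ F ∈ H, F ⊆ A ∪ B → E ≠ F →
      1 ≤ (E ∩ F).card ∧ (E ∩ F).card ≤ 2 := by
    intro E hE hEs F hF hFs hne
    constructor
    · obtain ⟨v, hv, _⟩ := claim3 E hE hEs F hF hFs
      exact Finset.card_pos.mpr ⟨v, hv⟩
    · by_contra h
      push_neg at h
      have h3 : E.card ≤ (E ∩ F).card := by rw [huniform E hE]; omega
      have hEF : E ∩ F = E := Finset.eq_of_subset_of_card_le Finset.inter_subset_left h3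
      have hEsubF : E ⊆ F := by rw [← hEF]; exact Finset.inter_subset_right
      have : F.card ≤ E.card := by rw [huniform E hE, huniform F hF]
      exact hne (Finset.eq_of_subset_of_card_le hEsubF this)
  -- Step A : find a pair of edges meeting in exactly one vertex
  obtain ⟨E₀, hE₀, hE₀s⟩ := step1
  have pairEx : ∃ P, P ∈ H ∧ P ⊆ A ∪ B ∧ ∃ Q, Q ∈ H ∧ Q ⊆ A ∪ B ∧ (P ∩ Q).card = 1 := by
    have h2B := claim1 E₀ hE₀ hE₀s
    obtain ⟨b₀, hb₀⟩ := Finset.card_pos.mp (show 0 < (E₀ ∩ B).card by omega)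
    obtain ⟨hb₀E, hb₀B⟩ := Finset.mem_inter.mp hb₀
    obtain ⟨G, hG, hGs, hGb₀⟩ := claim2 b₀ hb₀B
    have hGE₀ : G ≠ E₀ := fun h => hGb₀ (h ▸ hb₀E)
    by_cases h1 : (E₀ ∩ G).card = 1
    · exact ⟨E₀, hE₀, hE₀s, G, hG, hGs, h1⟩
    have hcEG := interCard E₀ hE₀ hE₀s G hG hGs (Ne.symm hGE₀)
    have h2 : (E₀ ∩ G).card = 2 := by omega
    obtain ⟨b₁, hb₁EG, hb₁B⟩ := claim3 E₀ hE₀ hE₀s G hG hGs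
    obtain ⟨hb₁E, hb₁G⟩ := Finset.mem_inter.mp hb₁EG
    obtain ⟨K, hK, hKs, hKb₁⟩ := claim2 b₁ hb₁B
    have hKE₀ : K ≠ E₀ := fun h => hKb₁ (h ▸ hb₁E)
    have hKG : K ≠ G := fun h => hKb₁ (h ▸ hb₁G)
    by_cases h3 : (K ∩ E₀).card = 1
    · exact ⟨K, hK, hKs, E₀, hE₀, hE₀s, h3⟩
    by_cases h4 : (K ∩ G).card = 1
    · exact ⟨K, hK, hKs, G, hG, hGs, h4⟩
    exfalso
    have hcKE := interCard K hK hKs E₀ hE₀ hE₀s hKE₀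
    have hcKG := interCard K hK hKs G hG hGs hKG
    have h5 : (K ∩ E₀).card = 2 := by omega
    have h6 : (K ∩ G).card = 2 := by omega
    -- K ∩ E₀ = E₀.erase b₁ and K ∩ G = G.erase b₁
    have hsubE : K ∩ E₀ ⊆ E₀.erase b₁ := by
      intro v hv
      obtain ⟨hvK, hvE⟩ := Finset.mem_inter.mp hv
      exact Finset.mem_erase.mpr ⟨fun h => hKb₁ (h ▸ hvK), hvE⟩
    have hEe : K ∩ E₀ = E₀.erase b₁ := by
      apply Finset.eq_of_subset_of_card_le hsubE
      rw [Finset.card_erase_of_mem hb₁E, huniform E₀ hE₀]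
      omega
    have hsubG : K ∩ G ⊆ G.erase b₁ := by
      intro v hv
      obtain ⟨hvK, hvG⟩ := Finset.mem_inter.mp hv
      exact Finset.mem_erase.mpr ⟨fun h => hKb₁ (h ▸ hvK), hvG⟩
    have hGe : K ∩ G = G.erase b₁ := by
      apply Finset.eq_of_subset_of_card_le hsubG
      rw [Finset.card_erase_of_mem hb₁G, huniform G hG]
      omega
    -- the second vertex t of E₀ ∩ G
    have ht1 : ((E₀ ∩ G).erase b₁).card = 1 := by
      rw [Finset.card_erase_of_mem hb₁EG, h2]
    obtain ⟨t, ht⟩ := Finset.card_eq_one.mp ht1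
    have htmem : t ∈ (E₀ ∩ G).erase b₁ := ht ▸ Finset.mem_singleton_self t
    obtain ⟨htb₁, htEG⟩ := Finset.mem_erase.mp htmem
    obtain ⟨htE, htG⟩ := Finset.mem_inter.mp htEG
    -- third vertices
    obtain ⟨x, hxE, hxb₁, hxt, hE₀eq⟩ := third (huniform E₀ hE₀) hb₁E htE (Ne.symm htb₁)
    obtain ⟨y, hyG, hyb₁, hyt, hGeq⟩ := third (huniform G hG) hb₁G htG (Ne.symm htb₁)
    have hxy : x ≠ y := by
      intro h
      apply hGE₀
      rw [hGeq, hE₀eq, h]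
    have hxK : x ∈ K := by
      have : x ∈ E₀.erase b₁ := Finset.mem_erase.mpr ⟨hxb₁, hxE⟩
      rw [← hEe] at this
      exact (Finset.mem_inter.mp this).1
    have hyK : y ∈ K := by
      have : y ∈ G.erase b₁ := Finset.mem_erase.mpr ⟨hyb₁, hyG⟩
      rw [← hGe] at this
      exact (Finset.mem_inter.mp this).1
    -- parts
    have hptb₁t : pt b₁ ≠ pt t := fun h => htb₁ (edgeInj E₀ hE₀ b₁ hb₁E t htE h).symm
    have hptx1 : pt x ≠ pt b₁ := fun h => hxb₁ (edgeInj E₀ hE₀ x hxE b₁ hb₁E h)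
    have hptx2 : pt x ≠ pt t := fun h => hxt (edgeInj E₀ hE₀ x hxE t htE h)
    have hpty1 : pt y ≠ pt b₁ := fun h => hyb₁ (edgeInj G hG y hyG b₁ hb₁G h)
    have hpty2 : pt y ≠ pt t := fun h => hyt (edgeInj G hG y hyG t htG h)
    have : pt x = pt y := fin3_eq (pt b₁) (pt t) (pt x) (pt y) hptb₁t hptx1 hptx2 hpty1 hpty2
    exact hxy (edgeInj K hK x hxK y hyK this)
  -- Step B : build the bad subhypergraph
  obtain ⟨P, hP, hPs, Q, hQ, hQs, hPQ⟩ := pairEx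
  obtain ⟨c, hc⟩ := Finset.card_eq_one.mp hPQ
  have hcPQ : c ∈ P ∩ Q := hc ▸ Finset.mem_singleton_self c
  obtain ⟨hcP, hcQ⟩ := Finset.mem_inter.mp hcPQ
  have hcB : c ∈ B := by
    obtain ⟨v, hv, hvB⟩ := claim3 P hP hPs Q hQ hQs
    have : v = c := by rw [hc] at hv; exact Finset.mem_singleton.mp hv
    exact this ▸ hvB
  obtain ⟨G, hG, hGs, hGc⟩ := claim2 c hcB
  -- e : common vertex of G and P ; f : common vertex of G and Q
  obtain ⟨e, heGP, heB⟩ := claim3 G hG hGs P hP hPs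
  obtain ⟨heG, heP⟩ := Finset.mem_inter.mp heGP
  obtain ⟨f, hfGQ, hfB⟩ := claim3 G hG hGs Q hQ hQs
  obtain ⟨hfG, hfQ⟩ := Finset.mem_inter.mp hfGQ
  have hec : e ≠ c := fun h => hGc (h ▸ heG)
  have hfc : f ≠ c := fun h => hGc (h ▸ hfG)
  have hef : e ≠ f := by
    intro h
    have : e ∈ P ∩ Q := Finset.mem_inter.mpr ⟨heP, h ▸ hfQ⟩
    rw [hc] at this
    exact hec (Finset.mem_singleton.mp this)
  -- third vertices
  obtain ⟨x, hxP, hxc, hxe, hPeq⟩ := third (huniform P hP) hcP heP (Ne.symm hec)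
  obtain ⟨y, hyQ, hyc, hyf, hQeq⟩ := third (huniform Q hQ) hcQ hfQ (Ne.symm hfc)
  obtain ⟨g, hgG, hge, hgf, hGeq⟩ := third (huniform G hG) heG hfG hef
  -- remaining distinctness facts
  have hgc : g ≠ c := fun h => hGc (h ▸ hgG)
  have hfP : f ∉ P := by
    intro h
    have : f ∈ P ∩ Q := Finset.mem_inter.mpr ⟨h, hfQ⟩
    rw [hc] at this
    exact hfc (Finset.mem_singleton.mp this)
  have hyP : y ∉ P := by
    intro h
    have : y ∈ P ∩ Q := Finset.mem_inter.mpr ⟨h, hyQ⟩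
    rw [hc] at this
    exact hyc (Finset.mem_singleton.mp this)
  have hfe : f ≠ e := Ne.symm hef
  have hfx : f ≠ x := fun h => hfP (h ▸ hxP)
  have hye : y ≠ e := fun h => hyP (h ▸ heP)
  have hyx : y ≠ x := fun h => hyP (h ▸ hxP)
  have hyf2 : y ≠ f := hyf
  -- parts of g and c agree
  have hptce : pt c ≠ pt e := fun h => hec.symm (edgeInj P hP c hcP e heP h)
  have hptcf : pt c ≠ pt f := fun h => hfc.symm (edgeInj Q hQ c hcQ f hfQ h)
  have hptge : pt g ≠ pt e := fun h => hge (edgeInj G hG g hgG e heG h)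
  have hptgf : pt g ≠ pt f := fun h => hgf (edgeInj G hG g hgG f hfG h)
  have hptef : pt e ≠ pt f := fun h => hef (edgeInj G hG e heG f hfG h)
  have hptcg : pt c = pt g := fin3_eq (pt e) (pt f) (pt c) (pt g) hptef hptce hptcf hptge hptgf
  have hgx : g ≠ x := by
    intro h
    apply hxc
    exact edgeInj P hP x hxP c hcP (by rw [← h, ← hptcg])
  have hgy : g ≠ y := by
    intro h
    apply hyc
    exact edgeInj Q hQ y hyQ c hcQ (by rw [← h, ← hptcg])
  -- assemble the bad subhypergraph
  apply hbad
  refine ⟨![x, e, c, y, f, g], ?_, ?_, ?_, ?_⟩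
  · exact inj6 hxe hxc (Ne.symm hyx) (Ne.symm hfx) (Ne.symm hgx)
      hec (Ne.symm hye) hef (Ne.symm hge)
      (Ne.symm hyc) (Ne.symm hfc) (Ne.symm hgc)
      hyf (Ne.symm hgy) (Ne.symm hgf)
  · show ({x, e, c} : Finset V) ∈ H
    have h : ({x, e, c} : Finset V) = {c, e, x} := by
      ext w; simp only [Finset.mem_insert, Finset.mem_singleton]; tauto
    rw [h, ← hPeq]
    exact hP
  · show ({c, y, f} : Finset V) ∈ H
    have h : ({c, y, f} : Finset V) = {c, f, y} := by
      ext w; simp only [Finset.mem_insert, Finset.mem_singleton]; tauto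
    rw [h, ← hQeq]
    exact hQ
  · show ({f, g, e} : Finset V) ∈ H
    have h : ({f, g, e} : Finset V) = {e, f, g} := by
      ext w; simp only [Finset.mem_insert, Finset.mem_singleton]; tauto
    rw [h, ← hGeq]
    exact hG
end BadHyp

/-- For a simple 3-uniform 3-partite hypergraph `H` with edge ideal `I`,
if `I⁽²⁾ ≠ I²` then `H` contains a bad subhypergraph of length 3. -/
theorem hasBad_of_symbolicPower_two_ne
    (k : Type*) [Field k] {V : Type*} [Fintype V] [DecidableEq V]
    (H : Set (Finset V)) (X : Fin 3 → Finset V)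
    -- the parts are pairwise disjoint and cover the vertex set
    (hdisj : ∀ i j : Fin 3, i ≠ j → Disjoint (X i) (X j))
    (hcover : ∀ v : V, ∃ i : Fin 3, v ∈ X i)
    -- `H` is simple: no hyperedge contains another
    (hsimple : ∀ E ∈ H, ∀ F ∈ H, E ⊆ F → E = F)
    -- `H` is 3-uniform
    (huniform : ∀ E ∈ H, E.card = 3)
    -- `H` is 3-partite with respect to the partition `X`
    (hpartite : ∀ E ∈ H, ∀ i : Fin 3, (E ∩ X i).card = 1)
    (hne : symbolicPower (edgeIdeal k H) 2 ≠ (edgeIdeal k H) ^ 2) :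
    HasBadSubhypergraph H := by
  classical
  by_contra hbad
  apply hne
  apply le_antisymm
  · -- the hard inclusion : symbolic square ≤ ordinary square
    intro f hf
    have hterm : ∀ a ∈ f.support,
        (MvPolynomial.monomial a (MvPolynomial.coeff a f)) ∈ (edgeIdeal k H) ^ 2 := by
      intro a ha
      have hw : ∀ C : Finset V, (∀ E ∈ H, ∃ v ∈ E, v ∈ C) → 2 ≤ ∑ v ∈ C, a v := by
        intro C hC
        exact BadHyp.weight_two_of_mem_PC_sq C f
          (BadHyp.mem_PC_sq_of_symbolic hf C (BadHyp.edgeIdeal_le_PC hC)) a ha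
      obtain ⟨E, hE, F, hF, hle⟩ :=
        BadHyp.comb H X hdisj hcover huniform hpartite hbad a hw
      exact BadHyp.monomial_mem_sq hE hF hle _
    rw [f.as_sum]
    exact Ideal.sum_mem _ hterm
  · -- the easy inclusion
    refine le_iInf fun p => le_iInf fun hp => ?_
    exact Ideal.pow_right_mono hp.1.2 2
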